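/- Let n be a positive integer with binary digits n_i, and let e ≥ 1 satisfy n_e = n_{e−1} ≠ n_{e+1}. Define n(e) by deleting the e-th binary digit and shifting the lower digits up: n(e) = ∑_{i>e} n_i 2^i + ∑_{i<e} n_i 2^{i+1}. Then V(n(e)) = V(n) and S(n(e)) ≤ S(n). -/

import Mathlib

open MeasureTheory Finset

noncomputable section

/-- The dyadic group: countable product of ℤ/2. -/
abbrev G := ℕ → ZMod 2

/-- Binary digits of a real number, as an element of the dyadic group. -/
def toG (x : ℝ) : G := fun n => ((⌊x * 2 ^ (n + 1)⌋ : ℤ) : ZMod 2)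

/-- Haar (product) measure on the dyadic group, realized as the pushforward
of Lebesgue measure on `[0,1)` under the binary digit map. -/
def muG : Measure G := (volume.restrict (Set.Ico (0:ℝ) 1)).map toG

/-- Walsh–Paley functions. -/
def walsh (m : ℕ) (x : G) : ℝ :=
  ∏ k ∈ Finset.range m, if m.testBit k then (-1 : ℝ) ^ ((x k).val) else 1

/-- Walsh–Dirichlet kernel. -/
def Dir (n : ℕ) (x : G) : ℝ := ∑ k ∈ Finset.range n, walsh k x

/-- Dyadic interval `I_n` of rank `n` about `0`. -/
def Iset (n : ℕ) : Set G := {x | ∀ i < n, x i = 0}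

/-- `k`-th binary digit of `n`, as a natural number. -/
def bit (n k : ℕ) : ℕ := (n.testBit k).toNat

/-- `α_i(n) = |∑_{k<i} n_k 2^k − n_i 2^i|`. -/
def alpha (n i : ℕ) : ℤ :=
  |(∑ k ∈ Finset.range i, (bit n k : ℤ) * 2 ^ k) - (bit n i : ℤ) * 2 ^ i|

/-- Binary variation `V(n) = n_0 + ∑_{k≥1} |n_k − n_{k−1}|`. -/
def V (n : ℕ) : ℕ :=
  bit n 0 + ∑ k ∈ Finset.range n, if n.testBit (k+1) ≠ n.testBit k then 1 else 0

/-- `A(n)`: indices where consecutive binary digits differ (with `n_{−1} = 0`). -/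
def Aset (n : ℕ) : Finset ℕ :=
  (Finset.range (n+1)).filter
    (fun i => if i = 0 then n.testBit 0 else n.testBit i ≠ n.testBit (i-1))

/-- `S(n) = ∑_{i ∈ A(n)} α_i(n)/2^{i+1}`. -/
def S (n : ℕ) : ℝ := ∑ i ∈ Aset n, (alpha n i : ℝ) / 2 ^ (i+1)

/-- `j`-th binary digit of a real number `t ∈ [0,1)`. -/
def tdig (t : ℝ) (j : ℕ) : ℕ := (⌊t * 2 ^ (j+1)⌋ % 2).toNat

/-- `m = ∑_{i=0}^{N-1} t_{i+1} 2^i`. -/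
def mOf (t : ℝ) (N : ℕ) : ℕ := ∑ i ∈ Finset.range N, tdig t (i+1) * 2 ^ i

/-- Conjugate Walsh–Dirichlet kernel
`D̃_n^{(t)} = D_n − 2 w_m D_m − 2 t_{N+1}(D_n − D_{2^N})` where `m = mOf t N`. -/
def Dconj (t : ℝ) (N n : ℕ) (x : G) : ℝ :=
  Dir n x - 2 * walsh (mOf t N) x * Dir (mOf t N) x
    - 2 * (tdig t (N+1) : ℝ) * (Dir n x - Dir (2^N) x)

/-- Lebesgue constant of the conjugate transform. -/
def Leb (t : ℝ) (N n : ℕ) : ℝ := ∫ x, |Dconj t N n x| ∂muG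

/-- `T(a,b) = {i : 1 ≤ i ≤ N−1, a_i ≠ a_{i−1}, b_i = b_{i−1}}`. -/
def Tset (N a b : ℕ) : Finset ℕ :=
  (Finset.Icc 1 (N-1)).filter
    (fun i => a.testBit i ≠ a.testBit (i-1) ∧ b.testBit i = b.testBit (i-1))

lemma testBit_lt {m j : ℕ} (h : m.testBit j = true) : j < m := by
  rcases Nat.lt_or_ge m (2^j) with h'|h'
  · simp [Nat.testBit_eq_false_of_lt h'] at h
  · exact lt_of_lt_of_le (Nat.lt_two_pow_self (n := j)) h'

lemma mem_Aset_iff {m : ℕ} {i : ℕ} :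
    i ∈ Aset m ↔ (if i = 0 then m.testBit 0 = true else m.testBit i ≠ m.testBit (i-1)) := by
  unfold Aset
  rw [Finset.mem_filter, Finset.mem_range]
  constructor
  · rintro ⟨_, h⟩
    split at h <;> split <;> simp_all
  · intro h
    refine ⟨?_, ?_⟩
    · split at h
      · omega
      · rcases Bool.eq_false_or_eq_true (m.testBit i) with hb|hb
        · have := testBit_lt hb
          omega
        · have hb' : m.testBit (i-1) = true := by
            rcases Bool.eq_false_or_eq_true (m.testBit (i-1)) with hc|hc
            · exact hc
            · exact absurd (hb.trans hc.symm) h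
          have := testBit_lt hb'
          omega
    · split at h <;> split <;> simp_all

lemma mod_cast_sum (m i : ℕ) :
    ((m % 2^i : ℕ) : ℤ) = ∑ k ∈ Finset.range i, (bit m k : ℤ) * 2^k := by
  induction i with
  | zero => simp
  | succ i ih =>
    rw [Finset.sum_range_succ, ← ih, Nat.mod_pow_succ]
    have : bit m i = m / 2^i % 2 := by
      unfold bit
      rw [Nat.testBit_eq_decide_div_mod_eq]
      rcases Nat.mod_two_eq_zero_or_one (m / 2^i) with h|h <;> simp [h]
    rw [this]
    push_cast
    ring

lemma alpha_eq (m i : ℕ) : alpha m i = |((m % 2^i : ℕ) : ℤ) - (bit m i : ℤ) * 2^i| := by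
  rw [alpha, mod_cast_sum]

lemma mod_mul_helper (a b c d : ℕ) (hb : b < c) : (a * c + b) % (c * d) = (a % d) * c + b := by
  rcases Nat.eq_zero_or_pos d with rfl|hd
  · simp [Nat.mod_zero]
  · have h1 : a * c + b = (a % d) * c + b + (a / d) * (c * d) := by
      conv_lhs => rw [← Nat.div_add_mod a d]
      ring
    rw [h1, Nat.add_mul_mod_self_right]
    apply Nat.mod_eq_of_lt
    have h2 : a % d < d := Nat.mod_lt _ hd
    calc (a % d) * c + b < (a % d) * c + c := by omega
      _ = (a % d + 1) * c := by ring
      _ ≤ d * c := Nat.mul_le_mul_right _ (by omega)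
      _ = c * d := mul_comm _ _

lemma testBit_false_of_le {m j : ℕ} (h : m ≤ j) : m.testBit j = false :=
  Nat.testBit_eq_false_of_lt (lt_of_le_of_lt h (Nat.lt_two_pow_self (n := j)))

lemma bit_eq (m i : ℕ) : bit m i = m / 2^i % 2 := by
  unfold bit
  rw [Nat.testBit_eq_decide_div_mod_eq]
  rcases Nat.mod_two_eq_zero_or_one (m / 2^i) with h|h <;> simp [h]

section Del
variable (n e : ℕ)

lemma bit_del (he : 1 ≤ e) (i : ℕ) :
    (n / 2^(e+1) * 2^(e+1) + (n % 2^e) * 2).testBit i =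
      if i = 0 then false else if i ≤ e then n.testBit (i-1) else n.testBit i := by
  have h : n / 2^(e+1) * 2^(e+1) + (n % 2^e) * 2
      = 2^(e+1) * (n / 2^(e+1)) + (2^1 * (n % 2^e) + 0) := by ring
  have hb : 2^1 * (n % 2^e) + 0 < 2^(e+1) := by
    have h0 : n % 2^e < 2^e := Nat.mod_lt _ (by positivity)
    have h1 : (2:ℕ)^(e+1) = 2^e * 2 := by ring
    omega
  rw [h, Nat.testBit_two_pow_mul_add _ hb,
      Nat.testBit_two_pow_mul_add _ (by norm_num : (0:ℕ) < 2^1)]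
  by_cases h0 : i = 0
  · subst h0
    simp
  · by_cases hle : i ≤ e
    · rw [if_pos (by omega), if_neg (by omega), Nat.testBit_mod_two_pow,
        if_neg h0, if_pos hle]
      have : i - 1 < e := by omega
      simp [this]
    · rw [if_neg (by omega), if_neg h0, if_neg hle,
        ← Nat.shiftRight_eq_div_pow, Nat.testBit_shiftRight]
      congr 1
      omega

lemma mod_del_low (he : 1 ≤ e) {i : ℕ} (hi : 1 ≤ i) (hie : i ≤ e) :
    (n / 2^(e+1) * 2^(e+1) + (n % 2^e) * 2) % 2^i = 2 * (n % 2^(i-1)) := by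
  have hd : (2:ℕ)^i ∣ n / 2^(e+1) * 2^(e+1) := Dvd.dvd.mul_left (pow_dvd_pow 2 (by omega)) _
  have h0 : n / 2^(e+1) * 2^(e+1) % 2^i = 0 := Nat.mod_eq_zero_of_dvd hd
  rw [Nat.add_mod, h0, zero_add, Nat.mod_mod]
  have h2 : n % 2^e * 2 = 2 * (n % 2^e) := mul_comm _ _
  have h3 : (2:ℕ)^i = 2 * 2^(i-1) := by
    rw [← pow_succ']
    congr 1
    omega
  rw [h2, h3, Nat.mul_mod_mul_left, Nat.mod_mod_of_dvd _ (pow_dvd_pow 2 (by omega))]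

lemma mod_del_high (he : 1 ≤ e) {i : ℕ} (hi : e + 1 ≤ i) :
    (((n / 2^(e+1) * 2^(e+1) + (n % 2^e) * 2) % 2^i : ℕ) : ℤ)
      = ((n % 2^i : ℕ) : ℤ) + ((n % 2^e : ℕ) : ℤ) - (bit n e : ℤ) * 2^e := by
  have hpow : (2:ℕ)^i = 2^(e+1) * 2^(i-(e+1)) := by
    rw [← pow_add]; congr 1; omega
  have hb : (n % 2^e) * 2 < 2^(e+1) := by
    have h0 : n % 2^e < 2^e := Nat.mod_lt _ (by positivity)
    have h1 : (2:ℕ)^(e+1) = 2^e * 2 := by ring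
    omega
  have hA : (n / 2^(e+1) * 2^(e+1) + (n % 2^e) * 2) % 2^i
      = (n / 2^(e+1) % 2^(i-(e+1))) * 2^(e+1) + (n % 2^e) * 2 := by
    rw [hpow]; exact mod_mul_helper _ _ _ _ hb
  have hB : n % 2^i = (n / 2^(e+1) % 2^(i-(e+1))) * 2^(e+1) + n % 2^(e+1) := by
    have hn2 : n / 2^(e+1) * 2^(e+1) + n % 2^(e+1) = n := by
      rw [mul_comm]
      exact Nat.div_add_mod n _
    conv_lhs => rw [← hn2]
    rw [hpow]
    exact mod_mul_helper _ _ _ _ (Nat.mod_lt _ (by positivity))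
  have hC : n % 2^(e+1) = n % 2^e + 2^e * (bit n e) := by
    rw [bit_eq]; exact Nat.mod_pow_succ
  rw [hA, hB, hC]
  push_cast
  ring
end Del

section Del2
variable (n e : ℕ)

lemma alpha_del_low (he : 1 ≤ e) {i : ℕ} (hi : 1 ≤ i) (hie : i ≤ e) :
    alpha (n / 2^(e+1) * 2^(e+1) + (n % 2^e) * 2) i = 2 * alpha n (i-1) := by
  rw [alpha_eq, alpha_eq, mod_del_low n e he hi hie]
  have hb : bit (n / 2^(e+1) * 2^(e+1) + (n % 2^e) * 2) i = bit n (i-1) := by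
    unfold bit
    rw [bit_del n e he, if_neg (by omega), if_pos hie]
  rw [hb]
  have hp : (2:ℤ)^i = 2 * 2^(i-1) := by
    rw [← pow_succ']
    congr 1
    omega
  rw [hp, show ((2 * (n % 2^(i-1)) : ℕ) : ℤ) = 2 * ((n % 2^(i-1) : ℕ) : ℤ) from by
      push_cast; ring,
    show (2:ℤ) * ((n % 2^(i-1) : ℕ) : ℤ) - (bit n (i-1) : ℤ) * (2 * 2^(i-1))
      = 2 * (((n % 2^(i-1) : ℕ) : ℤ) - (bit n (i-1) : ℤ) * 2^(i-1)) from by ring,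
    abs_mul]
  norm_num

lemma alpha_del_high (he : 1 ≤ e) {i : ℕ} (hi : e + 1 ≤ i) :
    alpha (n / 2^(e+1) * 2^(e+1) + (n % 2^e) * 2) i
      = alpha n i + (if n.testBit i then
          -(((n % 2^e : ℕ) : ℤ) - (bit n e : ℤ) * 2^e)
        else ((n % 2^e : ℕ) : ℤ) - (bit n e : ℤ) * 2^e) := by
  set n' := n / 2^(e+1) * 2^(e+1) + (n % 2^e) * 2 with hn'
  have hb : n'.testBit i = n.testBit i := by
    rw [hn', bit_del n e he, if_neg (by omega), if_neg (by omega)]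
  have hkey := mod_del_high n e he hi
  rw [← hn'] at hkey
  have hbb : (bit n' i : ℤ) = (bit n i : ℤ) := by
    unfold bit
    rw [hb]
  have hlt1 : ((n % 2^i : ℕ) : ℤ) < 2^i := by
    have : n % 2^i < 2^i := Nat.mod_lt n (by positivity)
    exact_mod_cast this
  have hlt2 : ((n' % 2^i : ℕ) : ℤ) < 2^i := by
    have : n' % 2^i < 2^i := Nat.mod_lt n' (by positivity)
    exact_mod_cast this
  have hge1 : (0:ℤ) ≤ ((n % 2^i : ℕ) : ℤ) := by positivity
  have hge2 : (0:ℤ) ≤ ((n' % 2^i : ℕ) : ℤ) := by positivity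
  rw [alpha_eq, alpha_eq, hbb]
  rcases Bool.eq_false_or_eq_true (n.testBit i) with ht|ht
  · rw [ht]
    have hbit : (bit n i : ℤ) = 1 := by simp [bit, ht]
    rw [hbit]
    simp only [if_pos rfl, one_mul]
    rw [abs_of_nonpos (by linarith), abs_of_nonpos (by linarith)]
    rw [hkey]
    norm_num
    ring
  · rw [ht]
    have hbit : (bit n i : ℤ) = 0 := by simp [bit, ht]
    rw [hbit]
    simp only [Bool.false_eq_true, if_false, zero_mul, sub_zero]
    rw [abs_of_nonneg hge2, abs_of_nonneg hge1, hkey]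
    ring
end Del2

lemma V_stable {m M : ℕ} (h : m ≤ M) :
    V m = bit m 0 + ∑ k ∈ Finset.range M,
      (if m.testBit (k+1) ≠ m.testBit k then 1 else 0) := by
  unfold V
  congr 1
  apply Finset.sum_subset (Finset.range_subset_range.2 h)
  intro k _ hk
  rw [Finset.mem_range] at hk
  push_neg at hk
  rw [testBit_false_of_le (by omega), testBit_false_of_le (by omega)]
  simp

lemma geom_tail (a M : ℕ) : ∑ i ∈ Finset.Icc a M, ((1:ℝ)/2)^(i+1) ≤ (1/2)^a := by
  rw [← Finset.Ico_add_one_right_eq_Icc, Finset.sum_Ico_eq_sum_range]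
  have h1 : ∀ k, ((1:ℝ)/2)^(a+k+1) = (1/2)^(a+1) * (1/2)^k := fun k => by ring
  calc ∑ k ∈ Finset.range (M+1-a), ((1:ℝ)/2)^(a+k+1)
      = (1/2)^(a+1) * ∑ k ∈ Finset.range (M+1-a), ((1:ℝ)/2)^k := by
        rw [Finset.mul_sum]
        exact Finset.sum_congr rfl fun k _ => h1 k
    _ ≤ (1/2)^(a+1) * 2 := by
        apply mul_le_mul_of_nonneg_left (sum_geometric_two_le _) (by positivity)
    _ = (1/2)^a := by
        rw [pow_succ]
        ring

lemma Aset_le {m i : ℕ} (h : i ∈ Aset m) : i ≤ m := by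
  unfold Aset at h
  rw [Finset.mem_filter, Finset.mem_range] at h
  omega


theorem V_eq_and_S_le_of_delete (n e : ℕ) (hn : 0 < n) (he : 1 ≤ e)
    (h1 : n.testBit e = n.testBit (e-1)) (h2 : n.testBit e ≠ n.testBit (e+1)) :
    V (n / 2^(e+1) * 2^(e+1) + (n % 2^e) * 2) = V n ∧
    S (n / 2^(e+1) * 2^(e+1) + (n % 2^e) * 2) ≤ S n := by
  set n' := n / 2^(e+1) * 2^(e+1) + (n % 2^e) * 2 with hn'def
  have hbit : ∀ i, n'.testBit i =
      if i = 0 then false else if i ≤ e then n.testBit (i-1) else n.testBit i :=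
    bit_del n e he
  have he_lt : e < n := by
    rcases Bool.eq_false_or_eq_true (n.testBit e) with ht|ht
    · exact testBit_lt ht
    · have ht2 : n.testBit (e+1) = true := by
        rcases Bool.eq_false_or_eq_true (n.testBit (e+1)) with hc|hc
        · exact hc
        · exact absurd (ht.trans hc.symm) h2
      have := testBit_lt ht2
      omega
  constructor
  · -- V part
    set M := n + n' + 1 with hM
    have hVn : V n = bit n 0 + ∑ k ∈ Finset.range M,
        (if n.testBit (k+1) ≠ n.testBit k then 1 else 0) := V_stable (by omega)
    have hVn' : V n' = bit n' 0 + ∑ k ∈ Finset.range M,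
        (if n'.testBit (k+1) ≠ n'.testBit k then 1 else 0) := V_stable (by omega)
    have hb0 : bit n' 0 = 0 := by simp [bit, hbit 0]
    have heM : e ≤ M := by omega
    have hsplit' : ∑ k ∈ Finset.range M, (if n'.testBit (k+1) ≠ n'.testBit k then 1 else 0)
        = (if n'.testBit 1 ≠ n'.testBit 0 then 1 else 0)
          + ∑ k ∈ Finset.Ico 1 e, (if n'.testBit (k+1) ≠ n'.testBit k then 1 else 0)
          + ∑ k ∈ Finset.Ico e M, (if n'.testBit (k+1) ≠ n'.testBit k then 1 else 0) := by
      rw [Finset.range_eq_Ico, ← Finset.sum_Ico_consecutive _ (Nat.zero_le e) heM,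
        ← Finset.sum_Ico_consecutive _ (by omega : (0:ℕ) ≤ 1) he,
        show Finset.Ico 0 1 = {0} from Nat.Ico_succ_singleton 0,
        Finset.sum_singleton]
    have hsplit : ∑ k ∈ Finset.range M, (if n.testBit (k+1) ≠ n.testBit k then 1 else 0)
        = ∑ k ∈ Finset.Ico 0 (e-1), (if n.testBit (k+1) ≠ n.testBit k then 1 else 0)
          + (if n.testBit ((e-1)+1) ≠ n.testBit (e-1) then 1 else 0)
          + ∑ k ∈ Finset.Ico e M, (if n.testBit (k+1) ≠ n.testBit k then 1 else 0) := by
      rw [Finset.range_eq_Ico,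
        ← Finset.sum_Ico_consecutive _ (by omega : (0:ℕ) ≤ e - 1) (by omega : e - 1 ≤ M),
        ← Finset.sum_Ico_consecutive _ (by omega : e - 1 ≤ e) heM,
        show Finset.Ico (e-1) e = {e-1} from by
          rw [show e = (e-1)+1 from by omega]; exact Nat.Ico_succ_singleton (e-1),
        Finset.sum_singleton]
      ring
    have hd0 : (if n'.testBit 1 ≠ n'.testBit 0 then 1 else 0) = bit n 0 := by
      have c1 : ¬(1 = 0) := one_ne_zero
      rw [hbit 1, hbit 0, if_neg c1, if_pos he, if_pos rfl]
      rcases Bool.eq_false_or_eq_true (n.testBit 0) with ht|ht <;> simp [bit, ht]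
    have hlow : ∑ k ∈ Finset.Ico 1 e, (if n'.testBit (k+1) ≠ n'.testBit k then 1 else 0)
        = ∑ k ∈ Finset.Ico 0 (e-1), (if n.testBit (k+1) ≠ n.testBit k then 1 else 0) := by
      rw [Finset.sum_Ico_eq_sum_range, Finset.sum_Ico_eq_sum_range]
      simp only [Nat.sub_zero]
      apply Finset.sum_congr rfl
      intro k hk
      rw [Finset.mem_range] at hk
      have c1 : ¬(1 + k + 1 = 0) := by omega
      have c2 : 1 + k + 1 ≤ e := by omega
      have c3 : ¬(1 + k = 0) := by omega
      have c4 : 1 + k ≤ e := by omega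
      rw [hbit (1+k+1), hbit (1+k), if_neg c1, if_pos c2, if_neg c3, if_pos c4]
      have e1 : 1 + k + 1 - 1 = 0 + k + 1 := by omega
      have e2 : 1 + k - 1 = 0 + k := by omega
      rw [e1, e2]
    have hhigh : ∑ k ∈ Finset.Ico e M, (if n'.testBit (k+1) ≠ n'.testBit k then 1 else 0)
        = ∑ k ∈ Finset.Ico e M, (if n.testBit (k+1) ≠ n.testBit k then 1 else 0) := by
      apply Finset.sum_congr rfl
      intro k hk
      rw [Finset.mem_Ico] at hk
      rcases eq_or_lt_of_le hk.1 with hke|hke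
      · subst hke
        have c1 : ¬(e + 1 = 0) := by omega
        have c2 : ¬(e + 1 ≤ e) := by omega
        have c3 : ¬(e = 0) := by omega
        have c4 : e ≤ e := le_rfl
        rw [hbit (e+1), hbit e, if_neg c1, if_neg c2, if_neg c3, if_pos c4, ← h1]
      · have c1 : ¬(k + 1 = 0) := by omega
        have c2 : ¬(k + 1 ≤ e) := by omega
        have c3 : ¬(k = 0) := by omega
        have c4 : ¬(k ≤ e) := by omega
        rw [hbit (k+1), hbit k, if_neg c1, if_neg c2, if_neg c3, if_neg c4]
    have hde : (if n.testBit ((e-1)+1) ≠ n.testBit (e-1) then 1 else 0) = 0 := by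
      rw [show (e-1)+1 = e from by omega, h1]
      simp
    rw [hVn', hVn, hsplit', hsplit, hd0, hlow, hhigh, hde, hb0]
    omega
  ·
    -- S part
    set δ : ℤ := ((n % 2^e : ℕ) : ℤ) - (bit n e : ℤ) * 2^e with hδ
    have hAle : ∀ {m i : ℕ}, i ∈ Aset m → i ≤ m := fun h => Aset_le h
    -- high index sets agree
    have hiff : ∀ i, e < i → (i ∈ Aset n' ↔ i ∈ Aset n) := by
      intro i hi
      have c0 : ¬(i = 0) := by omega
      rw [mem_Aset_iff, mem_Aset_iff, if_neg c0, if_neg c0]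
      have c1 : ¬(i ≤ e) := by omega
      rw [hbit i, if_neg c0, if_neg c1]
      rcases eq_or_lt_of_le (Nat.succ_le_of_lt hi) with hie|hie
      · have c2 : ¬(i - 1 = 0) := by omega
        have c3 : i - 1 ≤ e := by omega
        rw [hbit (i-1), if_neg c2, if_pos c3]
        have h3 : i - 1 - 1 = e - 1 := by omega
        have h4 : i - 1 = e := by omega
        rw [h3, h4, ← h1]
      · have c2 : ¬(i - 1 = 0) := by omega
        have c3 : ¬(i - 1 ≤ e) := by omega
        rw [hbit (i-1), if_neg c2, if_neg c3]
    have hHeq : (Aset n').filter (fun i => ¬ i ≤ e) = (Aset n).filter (fun i => ¬ i ≤ e) := by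
      ext i
      simp only [Finset.mem_filter]
      constructor
      · rintro ⟨ha, hb⟩
        exact ⟨(hiff i (by omega)).mp ha, hb⟩
      · rintro ⟨ha, hb⟩
        exact ⟨(hiff i (by omega)).mpr ha, hb⟩
    -- low part equality
    have hLow : ∑ i ∈ (Aset n').filter (fun i => i ≤ e), (alpha n' i : ℝ)/2^(i+1)
        = ∑ i ∈ (Aset n).filter (fun i => i ≤ e), (alpha n i : ℝ)/2^(i+1) := by
      apply Finset.sum_nbij' (fun i => i - 1) (fun j => j + 1)
      · -- forward membership
        intro a ha
        rw [Finset.mem_filter] at ha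
        obtain ⟨haA, hale⟩ := ha
        rw [mem_Aset_iff] at haA
        have ha0 : ¬(a = 0) := by
          intro h0
          rw [if_pos h0, hbit 0, if_pos rfl] at haA
          simp at haA
        rw [if_neg ha0] at haA
        rw [Finset.mem_filter, mem_Aset_iff]
        refine ⟨?_, by omega⟩
        by_cases hone : a = 1
        · subst hone
          rw [if_pos rfl]
          rw [hbit 1, hbit 0, if_neg one_ne_zero, if_pos he, if_pos rfl] at haA
          simpa using haA
        · rw [if_neg (show ¬(a - 1 = 0) from by omega)]
          have c1 : ¬(a = 0) := ha0
          have c2 : a ≤ e := hale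
          have c3 : ¬(a - 1 = 0) := by omega
          have c4 : a - 1 ≤ e := by omega
          rw [hbit a, hbit (a-1), if_neg c1, if_pos c2, if_neg c3, if_pos c4] at haA
          exact haA
      · -- backward membership
        intro b hb
        rw [Finset.mem_filter] at hb
        obtain ⟨hbA, hble⟩ := hb
        rw [mem_Aset_iff] at hbA
        have hbe : b ≠ e := by
          intro h0
          subst h0
          rw [if_neg (by omega)] at hbA
          exact hbA h1
        rw [Finset.mem_filter, mem_Aset_iff]
        refine ⟨?_, by omega⟩
        rw [if_neg (show ¬(b + 1 = 0) from by omega)]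
        have c1 : ¬(b + 1 = 0) := by omega
        have c2 : b + 1 ≤ e := by omega
        rw [hbit (b+1)]
        simp only [Nat.add_sub_cancel]
        rw [hbit b, if_neg c1, if_pos c2]
        by_cases hb0 : b = 0
        · subst hb0
          rw [if_pos rfl] at hbA ⊢
          simp [hbA]
        · rw [if_neg hb0, if_pos hble]
          rw [if_neg hb0] at hbA
          exact hbA
      · -- left inverse
        intro a ha
        rw [Finset.mem_filter] at ha
        obtain ⟨haA, _⟩ := ha
        rw [mem_Aset_iff] at haA
        have ha0 : ¬(a = 0) := by
          intro h0
          rw [if_pos h0, hbit 0, if_pos rfl] at haA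
          simp at haA
        omega
      · intro b _
        omega
      · -- values
        intro a ha
        rw [Finset.mem_filter] at ha
        obtain ⟨haA, hale⟩ := ha
        rw [mem_Aset_iff] at haA
        have ha0 : ¬(a = 0) := by
          intro h0
          rw [if_pos h0, hbit 0, if_pos rfl] at haA
          simp at haA
        have hval := alpha_del_low n e he (show 1 ≤ a from by omega) hale
        rw [← hn'def] at hval
        rw [hval]
        have hae : a + 1 = ((a-1)+1)+1 := by omega
        rw [hae, pow_succ]
        push_cast
        ring
    -- high part inequality
    have hmemH : ∀ i ∈ (Aset n).filter (fun i => ¬ i ≤ e), e + 1 ≤ i ∧ i ≤ n := by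
      intro i hi
      rw [Finset.mem_filter] at hi
      exact ⟨by omega, Aset_le hi.1⟩
    have hterm : ∀ i ∈ (Aset n).filter (fun i => ¬ i ≤ e),
        (alpha n' i : ℝ)/2^(i+1) - (alpha n i : ℝ)/2^(i+1)
          = (if n.testBit i then -(δ:ℝ) else (δ:ℝ))/2^(i+1) := by
      intro i hi
      have hd := alpha_del_high n e he (hmemH i hi).1
      rw [← hn'def] at hd
      rcases Bool.eq_false_or_eq_true (n.testBit i) with ht|ht
      · rw [ht] at hd ⊢
        rw [if_pos rfl] at hd ⊢
        rw [hd, hδ]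
        push_cast
        ring
      · rw [ht] at hd ⊢
        simp only [Bool.false_eq_true, if_false] at hd ⊢
        rw [hd, hδ]
        push_cast
        ring
    have he1H : e + 1 ∈ (Aset n).filter (fun i => ¬ i ≤ e) := by
      rw [Finset.mem_filter, mem_Aset_iff, if_neg (show ¬(e+1 = 0) from by omega)]
      simp only [Nat.add_sub_cancel]
      exact ⟨fun hx => h2 hx.symm, by omega⟩
    have habs : (if n.testBit (e+1) then -(δ:ℝ) else (δ:ℝ)) = -((|δ| : ℤ) : ℝ) := by
      rcases Bool.eq_false_or_eq_true (n.testBit e) with ht|ht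
      · -- testBit e true: δ ≤ 0, testBit (e+1) false
        have hb1 : (bit n e : ℤ) = 1 := by simp [bit, ht]
        have hδneg : δ ≤ 0 := by
          rw [hδ, hb1]
          have hlt : n % 2^e < 2^e := Nat.mod_lt n (by positivity)
          have : ((n % 2^e : ℕ) : ℤ) < 2^e := by exact_mod_cast hlt
          linarith
        have ht1 : n.testBit (e+1) = false := by
          rcases Bool.eq_false_or_eq_true (n.testBit (e+1)) with hc|hc
          · exact absurd (ht.trans hc.symm) h2
          · exact hc
        rw [ht1]
        simp only [Bool.false_eq_true, if_false]
        rw [abs_of_nonpos hδneg]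
        push_cast
        ring
      · have hb0 : (bit n e : ℤ) = 0 := by simp [bit, ht]
        have hδpos : 0 ≤ δ := by
          rw [hδ, hb0]
          simp only [zero_mul, sub_zero]
          positivity
        have ht1 : n.testBit (e+1) = true := by
          rcases Bool.eq_false_or_eq_true (n.testBit (e+1)) with hc|hc
          · exact hc
          · exact absurd (ht.trans hc.symm) h2
        rw [ht1]
        simp only [if_pos rfl]
        rw [abs_of_nonneg hδpos]
        push_cast
        ring
    have hHle : ∑ i ∈ (Aset n).filter (fun i => ¬ i ≤ e), (alpha n' i : ℝ)/2^(i+1)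
        ≤ ∑ i ∈ (Aset n).filter (fun i => ¬ i ≤ e), (alpha n i : ℝ)/2^(i+1) := by
      have hkey : ∑ i ∈ (Aset n).filter (fun i => ¬ i ≤ e), (alpha n' i : ℝ)/2^(i+1)
          - ∑ i ∈ (Aset n).filter (fun i => ¬ i ≤ e), (alpha n i : ℝ)/2^(i+1) ≤ 0 := by
        rw [← Finset.sum_sub_distrib, Finset.sum_congr rfl hterm,
          ← Finset.add_sum_erase _ _ he1H]
        have hbound : ∑ i ∈ ((Aset n).filter (fun i => ¬ i ≤ e)).erase (e+1),
            (if n.testBit i then -(δ:ℝ) else (δ:ℝ))/2^(i+1)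
            ≤ ((|δ| : ℤ) : ℝ) * (1/2)^(e+2) := by
          calc ∑ i ∈ ((Aset n).filter (fun i => ¬ i ≤ e)).erase (e+1),
              (if n.testBit i then -(δ:ℝ) else (δ:ℝ))/2^(i+1)
              ≤ ∑ i ∈ ((Aset n).filter (fun i => ¬ i ≤ e)).erase (e+1),
                ((|δ| : ℤ) : ℝ) * (1/2)^(i+1) := by
                apply Finset.sum_le_sum
                intro i _
                have hnum : (if n.testBit i then -(δ:ℝ) else (δ:ℝ)) ≤ ((|δ| : ℤ) : ℝ) := by
                  rcases Bool.eq_false_or_eq_true (n.testBit i) with ht|ht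
                  · rw [ht, if_pos rfl]
                    have h5 : -δ ≤ |δ| := neg_le_abs δ
                    have h6 : ((-δ : ℤ) : ℝ) ≤ ((|δ| : ℤ) : ℝ) := by exact_mod_cast h5
                    rw [Int.cast_neg] at h6
                    exact h6
                  · rw [ht]
                    simp only [Bool.false_eq_true, if_false]
                    have h5 : δ ≤ |δ| := le_abs_self δ
                    exact_mod_cast h5
                calc (if n.testBit i then -(δ:ℝ) else (δ:ℝ))/2^(i+1)
                    ≤ ((|δ| : ℤ) : ℝ)/2^(i+1) := by gcongr
                  _ = ((|δ| : ℤ) : ℝ) * (1/2)^(i+1) := by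
                    rw [div_pow, one_pow, mul_one_div]
            _ ≤ ∑ i ∈ Finset.Icc (e+2) n, ((|δ| : ℤ) : ℝ) * (1/2)^(i+1) := by
                apply Finset.sum_le_sum_of_subset_of_nonneg
                · intro i hi
                  rw [Finset.mem_Icc]
                  have h3 := Finset.mem_of_mem_erase hi
                  have h4 := Finset.ne_of_mem_erase hi
                  have h5 := hmemH i h3
                  omega
                · intro i _ _
                  positivity
            _ = ((|δ| : ℤ) : ℝ) * ∑ i ∈ Finset.Icc (e+2) n, ((1:ℝ)/2)^(i+1) := by
                rw [Finset.mul_sum]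
            _ ≤ ((|δ| : ℤ) : ℝ) * (1/2)^(e+2) := by
                apply mul_le_mul_of_nonneg_left (geom_tail _ _) (by positivity)
        have hE : (if n.testBit (e+1) then -(δ:ℝ) else (δ:ℝ))/2^((e+1)+1)
            = -((|δ| : ℤ) : ℝ)/2^(e+2) := by
          rw [habs]
        have hfin : -((|δ| : ℤ) : ℝ)/2^(e+2) + ((|δ| : ℤ) : ℝ)*(1/2)^(e+2) = 0 := by
          have h7 : ((1:ℝ)/2)^(e+2) = 1/2^(e+2) := by rw [div_pow, one_pow]
          rw [h7]
          ring
        rw [hE]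
        linarith [hbound]
      linarith [hkey]
    -- assemble
    have hs1 := Finset.sum_filter_add_sum_filter_not (Aset n') (fun i => i ≤ e)
      (fun i => (alpha n' i : ℝ)/2^(i+1))
    have hs2 := Finset.sum_filter_add_sum_filter_not (Aset n) (fun i => i ≤ e)
      (fun i => (alpha n i : ℝ)/2^(i+1))
    have hS'eq : S n' = ∑ i ∈ (Aset n').filter (fun i => i ≤ e), (alpha n' i : ℝ)/2^(i+1)
        + ∑ i ∈ (Aset n).filter (fun i => ¬ i ≤ e), (alpha n' i : ℝ)/2^(i+1) := by
      unfold S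
      rw [← hs1, hHeq]
    have hSeq : S n = ∑ i ∈ (Aset n).filter (fun i => i ≤ e), (alpha n i : ℝ)/2^(i+1)
        + ∑ i ∈ (Aset n).filter (fun i => ¬ i ≤ e), (alpha n i : ℝ)/2^(i+1) := by
      unfold S
      rw [← hs2]
    rw [hS'eq, hSeq, hLow]
    linarith [hHle]
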